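/- Let F be a finite field with q elements where q ≡ 5 (mod 8). If (a,b) ∈ S_F^{back_2} and (p,r) is a nontrivial node with (p,r) ↦ (a,b), then exactly one of the two parents (p,r) and (r,p) of (a,b) lies in S_F^{back_2}. -/
import Mathlib


namespace AGM

variable {K : Type*} [Field K]

/-- A node `(a,b)` is nontrivial if `a`, `b`, `a+b`, `a-b` are all nonzero. -/
def Nontriv (p : K × K) : Prop :=
  p.1 ≠ 0 ∧ p.2 ≠ 0 ∧ p.1 + p.2 ≠ 0 ∧ p.1 - p.2 ≠ 0

/-- AGM advancement between nontrivial nodes: `2c = a + b` and `d² = ab`. -/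
def Adv (p q : K × K) : Prop :=
  Nontriv p ∧ Nontriv q ∧ 2 * q.1 = p.1 + p.2 ∧ q.2 ^ 2 = p.1 * p.2

/-- `AdvN n p`: there is a chain of `n` successive AGM advancements through
nontrivial nodes starting at `p`. -/
def AdvN : ℕ → K × K → Prop
  | 0, p => Nontriv p
  | n + 1, p => ∃ q, Adv p q ∧ AdvN n q

/-- `BackN n p`: there is a chain of `n` successive AGM advancements through
nontrivial nodes ending at `p`. -/
def BackN : ℕ → K × K → Prop
  | 0, p => Nontriv p
  | n + 1, p => ∃ q, Adv q p ∧ BackN n q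

/-- Indefinitely advanceable nodes. -/
def AdvInf (p : K × K) : Prop := ∀ n, AdvN n p

/-- Indefinitely backtrackable nodes. -/
def BackInf (p : K × K) : Prop := ∀ n, BackN n p

/-- Nontrivial k-values: `k ∉ {0, 1, -1}`. -/
def Tk (k : K) : Prop := k ≠ 0 ∧ k ≠ 1 ∧ k ≠ -1

/-- k-advancement: `(1+k₁)² k₂² = 4 k₁` for nontrivial k-values. -/
def kAdv (k₁ k₂ : K) : Prop := Tk k₁ ∧ Tk k₂ ∧ (1 + k₁) ^ 2 * k₂ ^ 2 = 4 * k₁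

/-- `TAdvN n k`: a chain of `n` k-advancements within `T_K` starting at `k`. -/
def TAdvN : ℕ → K → Prop
  | 0, k => Tk k
  | n + 1, k => ∃ k₂, kAdv k k₂ ∧ TAdvN n k₂

/-- `TBackN n k`: a chain of `n` k-advancements within `T_K` ending at `k`. -/
def TBackN : ℕ → K → Prop
  | 0, k => Tk k
  | n + 1, k => ∃ k₁, kAdv k₁ k ∧ TBackN n k₁

/-- Indefinitely advanceable k-values. -/
def TAdvInf (k : K) : Prop := ∀ n, TAdvN n k

/-- Indefinitely backtrackable k-values. -/
def TBackInf (k : K) : Prop := ∀ n, TBackN n k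

end AGM

namespace AGMAux

variable {F : Type*} [Field F]

lemma nontriv_pair {p r : F} (h : AGM.Nontriv (p, r)) :
    p ≠ 0 ∧ r ≠ 0 ∧ p + r ≠ 0 ∧ p - r ≠ 0 := h

lemma nontriv_mk {p r : F} (h1 : p ≠ 0) (h2 : r ≠ 0) (h3 : p + r ≠ 0) (h4 : p - r ≠ 0) :
    AGM.Nontriv (p, r) := ⟨h1, h2, h3, h4⟩

lemma adv_pair {u v p r : F} (h : AGM.Adv (u, v) (p, r)) :
    AGM.Nontriv (u, v) ∧ AGM.Nontriv (p, r) ∧ 2 * p = u + v ∧ r ^ 2 = u * v := h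

lemma adv_mk {u v p r : F} (h1 : AGM.Nontriv (u, v)) (h2 : AGM.Nontriv (p, r))
    (h3 : 2 * p = u + v) (h4 : r ^ 2 = u * v) : AGM.Adv (u, v) (p, r) := ⟨h1, h2, h3, h4⟩

lemma cancel4 {x y : F} (h2 : (2:F) ≠ 0) (h : 4 * x = 4 * y) : x = y := by
  have h4 : (4:F) ≠ 0 := by
    have e : (4:F) = 2 * 2 := by norm_num
    rw [e]; exact mul_ne_zero h2 h2
  exact mul_left_cancel₀ h4 h

lemma nontriv_parent {p r s : F} (h2 : (2:F) ≠ 0) (hp : p ≠ 0) (hr : r ≠ 0)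
    (hs : s ≠ 0) (hsq : s ^ 2 = p ^ 2 - r ^ 2) :
    AGM.Nontriv (p + s, p - s) := by
  have key : (p + s) * (p - s) = r ^ 2 := by linear_combination -hsq
  have h1 : p + s ≠ 0 := fun h => hr (pow_eq_zero_iff (n := 2) two_ne_zero |>.mp
    (by rw [← key, h, zero_mul]))
  have h2' : p - s ≠ 0 := fun h => hr (pow_eq_zero_iff (n := 2) two_ne_zero |>.mp
    (by rw [← key, h, mul_zero]))
  refine nontriv_mk h1 h2' (fun h => hp ?_) (fun h => hs ?_)
  · have : (2:F) * p = 0 := by linear_combination h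
    exact (mul_eq_zero.mp this).resolve_left h2
  · have : (2:F) * s = 0 := by linear_combination h
    exact (mul_eq_zero.mp this).resolve_left h2

lemma back1_iff {p r : F} (hnt : AGM.Nontriv (p, r)) (h2 : (2:F) ≠ 0) :
    AGM.BackN 1 (p, r) ↔ ∃ s : F, s ≠ 0 ∧ s ^ 2 = p ^ 2 - r ^ 2 := by
  obtain ⟨hp, hr, hpr, hpr'⟩ := nontriv_pair hnt
  simp only [AGM.BackN]
  constructor
  · rintro ⟨⟨u, v⟩, hadv, -⟩
    obtain ⟨hnuv, -, hsum, hprod⟩ := adv_pair hadv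
    obtain ⟨hu, hv, huv, huv'⟩ := nontriv_pair hnuv
    obtain ⟨s₁, hs₁⟩ : ∃ s₁ : F, 2 * s₁ = u - v := ⟨(u - v) / 2, by field_simp⟩
    refine ⟨s₁, fun h => huv' ?_, cancel4 h2 ?_⟩
    · rw [h, mul_zero] at hs₁; linear_combination -hs₁
    · linear_combination (2 * s₁ + u - v) * hs₁ - (2 * p + u + v) * hsum + 4 * hprod
  · rintro ⟨s, hs, hsq⟩
    have hnt' := nontriv_parent h2 hp hr hs hsq
    exact ⟨(p + s, p - s), adv_mk hnt' hnt (by ring) (by linear_combination hsq), hnt'⟩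

lemma back2_iff {p r s : F} (hnt : AGM.Nontriv (p, r)) (h2 : (2:F) ≠ 0)
    (hi : IsSquare (-1 : F)) (hs : s ≠ 0) (hsq : s ^ 2 = p ^ 2 - r ^ 2) :
    AGM.BackN 2 (p, r) ↔ IsSquare (p * s) := by
  obtain ⟨hp, hr, hpr, hpr'⟩ := nontriv_pair hnt
  constructor
  · rintro ⟨⟨u, v⟩, hadv, hb1⟩
    obtain ⟨hnuv, -, hsum, hprod⟩ := adv_pair hadv
    obtain ⟨hu, hv, huv, huv'⟩ := nontriv_pair hnuv
    obtain ⟨t, ht, htsq⟩ := (back1_iff hnuv h2).mp hb1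
    obtain ⟨s₁, hs₁⟩ : ∃ s₁ : F, 2 * s₁ = u - v := ⟨(u - v) / 2, by field_simp⟩
    obtain ⟨t₂, ht₂⟩ : ∃ t₂ : F, 2 * t₂ = t := ⟨t / 2, by field_simp⟩
    have hs₁sq : s₁ ^ 2 = p ^ 2 - r ^ 2 := by
      refine cancel4 h2 ?_
      linear_combination (2 * s₁ + u - v) * hs₁ - (2 * p + u + v) * hsum + 4 * hprod
    have hps₁ : p * s₁ = t₂ * t₂ := by
      refine cancel4 h2 ?_
      linear_combination 2 * s₁ * hsum + (u + v) * hs₁ - htsq - (2 * t₂ + t) * ht₂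
    have hcase : s = s₁ ∨ s = -s₁ := by
      have h0 : (s - s₁) * (s + s₁) = 0 := by linear_combination hsq - hs₁sq
      rcases mul_eq_zero.mp h0 with h | h
      · exact Or.inl (by linear_combination h)
      · exact Or.inr (by linear_combination h)
    obtain ⟨i, hisq⟩ := hi
    rcases hcase with h | h
    · exact ⟨t₂, by linear_combination hps₁ + p * h⟩
    · exact ⟨t₂ * i, by linear_combination p * h - hps₁ + t₂ ^ 2 * hisq⟩
  · rintro ⟨w, hw⟩
    have hwne : w ≠ 0 := fun h => (mul_ne_zero hp hs) (by rw [hw, h, mul_zero])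
    have hnt' := nontriv_parent h2 hp hr hs hsq
    refine ⟨(p + s, p - s), adv_mk hnt' hnt (by ring) (by linear_combination hsq), ?_⟩
    rw [back1_iff hnt' h2]
    exact ⟨2 * w, mul_ne_zero h2 hwne, by linear_combination -4 * hw⟩

lemma i_not_square {F : Type*} [Field F] [Fintype F] {q : ℕ}
    (hq : Fintype.card F = q) (h5 : q % 8 = 5) {i : F} (hi : i * i = -1) :
    ¬ IsSquare i := by
  classical
  have h2 : (2:F) ≠ 0 := by
    refine Ring.two_ne_zero fun hchar => ?_
    have := FiniteField.even_card_iff_char_two.mp hchar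
    rw [hq] at this; omega
  have hne : (-1 : F) ≠ 1 := fun h => h2 (by linear_combination -h)
  rintro ⟨j, hj⟩
  have hj0 : j ≠ 0 := by
    rintro rfl
    rw [mul_zero] at hj
    rw [hj, mul_zero] at hi
    exact one_ne_zero (α := F) (by linear_combination hi)
  haveI : Fact (Nat.Prime 2) := ⟨Nat.prime_two⟩
  set ju : Fˣ := Units.mk0 j hj0 with hju
  have hj4 : (ju : F) ^ 4 = -1 := by
    simp only [hju, Units.val_mk0]
    calc j ^ 4 = (j * j) * (j * j) := by ring
    _ = i * i := by rw [← hj]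
    _ = -1 := hi
  have h4 : ju ^ 2 ^ 2 ≠ 1 := by
    intro h
    have : (ju : F) ^ 4 = 1 := by
      have := congrArg (Units.val) h
      simpa using this
    rw [hj4] at this
    exact hne this
  have h8 : ju ^ 2 ^ 3 = 1 := by
    ext
    push_cast
    calc (ju : F) ^ 8 = ((ju : F) ^ 4) ^ 2 := by ring
    _ = (-1 : F) ^ 2 := by rw [hj4]
    _ = 1 := by ring
  have hord : orderOf ju = 2 ^ 3 := orderOf_eq_prime_pow h4 h8
  have hdvd : orderOf ju ∣ Fintype.card Fˣ := orderOf_dvd_card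
  rw [hord, Fintype.card_units, hq] at hdvd
  obtain ⟨k, hk⟩ := hdvd
  omega

end AGMAux

theorem stmt13 {F : Type*} [Field F] [Fintype F] (q : ℕ)
    (hq : Fintype.card F = q) (h5 : q % 8 = 5)
    (a b p r : F) (hab : AGM.BackN 2 (a, b)) (hpar : AGM.Adv (p, r) (a, b)) :
    Xor' (AGM.BackN 2 (p, r)) (AGM.BackN 2 (r, p)) := by
  classical
  open AGMAux in
  obtain ⟨hntpr, hntab, hsum, hprod⟩ := adv_pair hpar
  obtain ⟨hp, hr, hpr, hpr'⟩ := nontriv_pair hntpr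
  obtain ⟨ha, hb, -, -⟩ := nontriv_pair hntab
  have h2 : (2:F) ≠ 0 := by
    refine Ring.two_ne_zero fun hchar => ?_
    have := FiniteField.even_card_iff_char_two.mp hchar
    rw [hq] at this; omega
  have hneg : IsSquare (-1 : F) := by
    rw [FiniteField.isSquare_neg_one_iff, hq]; omega
  obtain ⟨i0, hi0⟩ := hneg
  have hi0' : i0 * i0 = -1 := hi0.symm
  have hi0ne : i0 ≠ 0 := by
    rintro rfl
    rw [mul_zero] at hi0'
    exact one_ne_zero (α := F) (by linear_combination hi0')
  -- extract grandparent data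
  obtain ⟨⟨u, v⟩, hadv2, hb1⟩ := hab
  obtain ⟨hnuv, -, hsum', hprod'⟩ := adv_pair hadv2
  have heq1 : p + r = u + v := by linear_combination hsum' - hsum
  have heq2 : p * r = u * v := by linear_combination hprod' - hprod
  obtain ⟨t, ht, htsq⟩ := (back1_iff hnuv h2).mp hb1
  have hcase : (u = p ∧ v = r) ∨ (u = r ∧ v = p) := by
    have h0 : (u - p) * (u - r) = 0 := by linear_combination -u * heq1 + heq2
    rcases mul_eq_zero.mp h0 with h | h
    · have hup : u = p := by linear_combination h
      exact Or.inl ⟨hup, by linear_combination -heq1 - h⟩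
    · have hur : u = r := by linear_combination h
      exact Or.inr ⟨hur, by linear_combination -heq1 - h⟩
  -- produce s with s² = p² - r²
  obtain ⟨s, hs, hsq⟩ : ∃ s : F, s ≠ 0 ∧ s ^ 2 = p ^ 2 - r ^ 2 := by
    rcases hcase with ⟨hu, hv⟩ | ⟨hu, hv⟩
    · rw [hu, hv] at htsq
      exact ⟨t, ht, htsq⟩
    · rw [hu, hv] at htsq
      exact ⟨i0 * t, mul_ne_zero hi0ne ht, by linear_combination -t ^ 2 * hi0 - htsq⟩
  -- the two iffs
  have hntrp : AGM.Nontriv (r, p) :=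
    nontriv_mk hr hp (by rwa [add_comm]) (fun h => hpr' (by linear_combination -h))
  have hs' : i0 * s ≠ 0 := mul_ne_zero hi0ne hs
  have hs'sq : (i0 * s) ^ 2 = r ^ 2 - p ^ 2 := by linear_combination -s ^ 2 * hi0 - hsq
  have hiff1 : AGM.BackN 2 (p, r) ↔ IsSquare (p * s) :=
    back2_iff hntpr h2 ⟨i0, hi0⟩ hs hsq
  have hiff2 : AGM.BackN 2 (r, p) ↔ IsSquare (r * (i0 * s)) :=
    back2_iff hntrp h2 ⟨i0, hi0⟩ hs' hs'sq
  -- quadratic character computation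
  have hA : p * s ≠ 0 := mul_ne_zero hp hs
  have hB : r * (i0 * s) ≠ 0 := mul_ne_zero hr hs'
  have hχi : quadraticChar F i0 = -1 :=
    quadraticChar_neg_one_iff_not_isSquare.mpr (i_not_square hq h5 hi0')
  have hprodχ : quadraticChar F (p * s) * quadraticChar F (r * (i0 * s)) = -1 := by
    rw [← map_mul]
    have e : (p * s) * (r * (i0 * s)) = i0 * (b * s) ^ 2 := by
      linear_combination -i0 * s ^ 2 * hprod
    rw [e, map_mul, quadraticChar_sq_one' (mul_ne_zero hb hs), hχi]
    ring
  rcases quadraticChar_dichotomy hA with hA1 | hA1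
  · have hB1 : quadraticChar F (r * (i0 * s)) = -1 := by
      rw [hA1, one_mul] at hprodχ; exact hprodχ
    refine Or.inl ⟨hiff1.mpr ((quadraticChar_one_iff_isSquare hA).mp hA1), fun h => ?_⟩
    exact (quadraticChar_neg_one_iff_not_isSquare.mp hB1) (hiff2.mp h)
  · have hB1 : quadraticChar F (r * (i0 * s)) = 1 := by
      rw [hA1] at hprodχ; linarith
    refine Or.inr ⟨hiff2.mpr ((quadraticChar_one_iff_isSquare hB).mp hB1), fun h => ?_⟩
    exact (quadraticChar_neg_one_iff_not_isSquare.mp hA1) (hiff1.mp h)
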